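/- Let Cₙ ⊆ Mₙ ⊗ Mₙ be a convex cone with Sₙ ⊆ Cₙ ⊆ Pₙ (separable ⊆ Cₙ ⊆ block-positive) such that (Ad_A ⊗ idₙ)(Cₙ) ⊆ Cₙ for all A ∈ Mₙ. Define for each m: C_m := { Σᵢ (Ad_{Aᵢ} ⊗ idₙ)(X) : Aᵢ ∈ M_{n,m}, X ∈ Cₙ }. Then C₁ = Mₙ⁺ and (Ad_B ⊗ idₙ)(C_{m₁}) ⊆ C_{m₂} for all B ∈ M_{m₁,m₂}, i.e. the family {C_m} defines an operator system on Mₙ. -/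

import Mathlib

open scoped ComplexOrder Pointwise
open Matrix

noncomputable section

/-- `n × n` complex matrices. -/
abbrev Mat (n : ℕ) : Type := Matrix (Fin n) (Fin n) ℂ

/-- `M_m ⊗ M_n`, realized as matrices indexed by `Fin m × Fin n`. -/
abbrev Mat2 (m n : ℕ) : Type := Matrix (Fin m × Fin n) (Fin m × Fin n) ℂ

/-- `(id_m ⊗ Φ)(X)`: apply `Φ` to each `n × n` block of `X`. -/
def rmap {m n : ℕ} (Φ : Mat n → Mat n) (X : Mat2 m n) : Mat2 m n :=
  Matrix.of fun p q => Φ (Matrix.of fun k l => X (p.1, k) (q.1, l)) p.2 q.2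

/-- `(Φ ⊗ id_n)(X)`. -/
def lmap {m n : ℕ} (Φ : Mat m → Mat m) (X : Mat2 m n) : Mat2 m n :=
  Matrix.of fun p q => Φ (Matrix.of fun i j => X (i, p.2) (j, q.2)) p.1 q.1

/-- The unnormalized maximally entangled matrix `E = Σ_{i,j} e_ie_j* ⊗ e_ie_j*`. -/
def Emat (n : ℕ) : Mat2 n n :=
  Matrix.of fun p q => if p.1 = p.2 ∧ q.1 = q.2 then 1 else 0

/-- The Choi matrix `C_Φ = (id_n ⊗ Φ)(E)`. -/
def choi {n : ℕ} (Φ : Mat n → Mat n) : Mat2 n n := rmap Φ (Emat n)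

/-- `Ψ` is the Hilbert–Schmidt adjoint of `Φ`: `Tr(Φ(X)Y) = Tr(X Ψ(Y))`. -/
def IsAdjoint {n : ℕ} (Φ Ψ : Mat n → Mat n) : Prop :=
  ∀ X Y : Mat n, ((Φ X) * Y).trace = (X * Ψ Y).trace

/-- Complete positivity of a map on `M_n`. -/
def IsCP {n : ℕ} (Φ : Mat n → Mat n) : Prop :=
  ∀ m : ℕ, ∀ X : Mat2 m n, X.PosSemidef → (rmap Φ X).PosSemidef

/-- Positivity of a map on `M_n`. -/
def IsPos {n : ℕ} (Φ : Mat n → Mat n) : Prop :=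
  ∀ X : Mat n, X.PosSemidef → (Φ X).PosSemidef

/-- `(Ad_A ⊗ id_n)(X)` for a rectangular `A ∈ M_{m₁,m₂}`, where `Ad_A(Y) = A* Y A`. -/
def adT {m₁ m₂ n : ℕ} (A : Matrix (Fin m₁) (Fin m₂) ℂ) (X : Mat2 m₁ n) : Mat2 m₂ n :=
  Matrix.of fun p q => ∑ i, ∑ j, (star (A i p.1)) * X (i, p.2) (j, q.2) * A j q.1

/-- Tensor product `Y ⊗ Z ∈ M_n ⊗ M_n`. -/
def kron {n : ℕ} (Y Z : Mat n) : Mat2 n n :=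
  Matrix.of fun p q => Y p.1 q.1 * Z p.2 q.2

/-- Block-positivity: `(v* ⊗ w*) Y (v ⊗ w) ≥ 0` for all `v, w`. -/
def BlockPos {n : ℕ} (Y : Mat2 n n) : Prop :=
  ∀ v w : Fin n → ℂ,
    0 ≤ star (fun p : Fin n × Fin n => v p.1 * w p.2) ⬝ᵥ
        (Y *ᵥ fun p : Fin n × Fin n => v p.1 * w p.2)

/-- Separability: a sum of tensor products of positive semidefinite matrices. -/
def SepMat {n : ℕ} (Y : Mat2 n n) : Prop :=
  ∃ (k : ℕ) (Z W : Fin k → Mat n),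
    (∀ i, (Z i).PosSemidef) ∧ (∀ i, (W i).PosSemidef) ∧ Y = ∑ i, kron (Z i) (W i)

/-- The dual cone of a cone of (linear) maps, under the Choi-matrix pairing. -/
def dualC {n : ℕ} (C : Set (Mat n → Mat n)) : Set (Mat n → Mat n) :=
  {Ψ | IsLinearMap ℂ Ψ ∧ ∀ Φ ∈ C, 0 ≤ ((choi Φ) * (choi Ψ)).trace}

/-- Right-CP-invariance: closed under right composition with completely positive maps. -/
def RightCPInv {n : ℕ} (C : Set (Mat n → Mat n)) : Prop :=
  ∀ Φ ∈ C, ∀ Ψ : Mat n → Mat n, IsCP Ψ → Φ ∘ Ψ ∈ C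

/-- A convex cone of maps: closed under addition and nonnegative scaling. -/
def IsConvexConeMaps {n : ℕ} (C : Set (Mat n → Mat n)) : Prop :=
  (∀ Φ ∈ C, ∀ Ψ ∈ C, Φ + Ψ ∈ C) ∧ (∀ Φ ∈ C, ∀ c : ℝ, 0 ≤ c → c • Φ ∈ C)

/-- A convex cone of matrices: closed under addition and nonnegative scaling. -/
def IsConvexConeMat {m n : ℕ} (C : Set (Mat2 m n)) : Prop :=
  (∀ X ∈ C, ∀ Y ∈ C, X + Y ∈ C) ∧ (∀ X ∈ C, ∀ c : ℝ, 0 ≤ c → c • X ∈ C)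

/-- The flip (swap) operator `F ∈ M_n ⊗ M_n`, `F(a ⊗ b) = b ⊗ a`. -/
def flipMat (n : ℕ) : Mat2 n n :=
  Matrix.of fun p q => if p.1 = q.2 ∧ p.2 = q.1 then 1 else 0

/-- Column-stacking vectorization of a matrix, as an element of `ℂⁿ ⊗ ℂⁿ`. -/
def vecM {n : ℕ} (X : Mat n) : Fin n × Fin n → ℂ := fun p => X p.2 p.1

/-- The family of cones generated by a cone `Cₙ ⊆ Mₙ ⊗ Mₙ`:
`C_m = { Σᵢ (Ad_{Aᵢ} ⊗ id_n)(X) : Aᵢ ∈ M_{n,m}, X ∈ Cₙ }`. -/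
def genCone {n : ℕ} (Cn : Set (Mat2 n n)) (m : ℕ) : Set (Mat2 m n) :=
  {Y | ∃ (k : ℕ) (A : Fin k → Matrix (Fin n) (Fin m) ℂ) (X : Mat2 n n),
    X ∈ Cn ∧ Y = ∑ i, adT (A i) X}

open scoped Kronecker

lemma posSemidef_of_dot {ι : Type*} [Fintype ι] [DecidableEq ι] (M : Matrix ι ι ℂ)
    (h : ∀ x : ι → ℂ, 0 ≤ star x ⬝ᵥ M *ᵥ x) : M.PosSemidef := by
  have hre : ∀ x : ι → ℂ, (starRingEnd ℂ) (star x ⬝ᵥ M *ᵥ x) = star x ⬝ᵥ M *ᵥ x := by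
    intro x
    have := h x
    rw [Complex.le_def] at this
    exact Complex.conj_eq_iff_im.mpr this.2.symm
  have key : ∀ x y : ι → ℂ, (starRingEnd ℂ) (star x ⬝ᵥ M *ᵥ y) = star y ⬝ᵥ M *ᵥ x := by
    intro x y
    have h1 := hre (x + y)
    have h2 := hre (x + Complex.I • y)
    have hxx := hre x
    have hyy := hre y
    simp only [star_add, add_dotProduct, dotProduct_add, mulVec_add, star_smul, smul_dotProduct,
      dotProduct_smul, mulVec_smul, map_add, _root_.map_mul, map_neg, neg_mul, smul_eq_mul,
      Complex.star_def, Complex.conj_I] at h1 h2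
    have e1 : (starRingEnd ℂ) (star x ⬝ᵥ M *ᵥ y) + (starRingEnd ℂ) (star y ⬝ᵥ M *ᵥ x)
        = star x ⬝ᵥ M *ᵥ y + star y ⬝ᵥ M *ᵥ x := by linear_combination h1 - hxx - hyy
    have e2 : (starRingEnd ℂ) (star y ⬝ᵥ M *ᵥ x) - (starRingEnd ℂ) (star x ⬝ᵥ M *ᵥ y)
        = -(star y ⬝ᵥ M *ᵥ x) + star x ⬝ᵥ M *ᵥ y :=
      mul_left_cancel₀ Complex.I_ne_zero (by linear_combination h2 - hxx - hyy +
        ((starRingEnd ℂ) (star y ⬝ᵥ M *ᵥ y) - star y ⬝ᵥ M *ᵥ y) * Complex.I_sq)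
    linear_combination (e1 - e2) / 2
  constructor
  · ext i j
    have := key (Pi.single j 1) (Pi.single i 1)
    simpa [dotProduct, mulVec, Pi.single_apply, apply_ite, Finset.sum_ite_eq,
      conjTranspose_apply] using this
  · intro x
    simpa [dotProduct, mulVec, Finsupp.sum_fintype, Finset.mul_sum, mul_assoc] using h x

lemma adT_eq {m₁ m₂ n : ℕ} (A : Matrix (Fin m₁) (Fin m₂) ℂ) (X : Mat2 m₁ n) :
    adT A X = (A ⊗ₖ (1 : Mat n))ᴴ * X * (A ⊗ₖ (1 : Mat n)) := by
  ext p q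
  simp only [adT, of_apply, Matrix.mul_apply, conjTranspose_apply, kroneckerMap_apply,
    Fintype.sum_prod_type, Matrix.one_apply, mul_ite, ite_mul, mul_zero, zero_mul, mul_one,
    star_mul', apply_ite (star : ℂ → ℂ), star_one, star_zero, Finset.sum_ite_eq,
    Finset.sum_ite_eq', Finset.mem_univ, if_true]
  rw [Finset.sum_comm]
  simp only [Finset.sum_mul, mul_assoc]

lemma adT_comp {m₁ m₂ m₃ n : ℕ} (A : Matrix (Fin m₁) (Fin m₂) ℂ)
    (B : Matrix (Fin m₂) (Fin m₃) ℂ) (X : Mat2 m₁ n) :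
    adT B (adT A X) = adT (A * B) X := by
  rw [adT_eq, adT_eq, adT_eq,
    show (A * B) ⊗ₖ (1 : Mat n) = (A ⊗ₖ (1 : Mat n)) * (B ⊗ₖ (1 : Mat n)) from by
      rw [← Matrix.mul_kronecker_mul, Matrix.one_mul],
    conjTranspose_mul]
  simp only [Matrix.mul_assoc]

lemma adT_sum {m₁ m₂ n k : ℕ} (B : Matrix (Fin m₁) (Fin m₂) ℂ) (f : Fin k → Mat2 m₁ n) :
    adT B (∑ i, f i) = ∑ i, adT B (f i) := by
  simp only [adT_eq, Matrix.sum_mul, Matrix.mul_sum]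

/-- `adT a X` of a block-positive `X` with `a : n × 1` is PSD. -/
lemma adT_posSemidef {n : ℕ} (a : Matrix (Fin n) (Fin 1) ℂ) (X : Mat2 n n)
    (hX : BlockPos X) : (adT a X).PosSemidef := by
  apply posSemidef_of_dot
  intro x
  rw [adT_eq]
  set K := a ⊗ₖ (1 : Mat n) with hK
  have h1 : star x ⬝ᵥ (Kᴴ * X * K) *ᵥ x = star (K *ᵥ x) ⬝ᵥ X *ᵥ (K *ᵥ x) := by
    rw [← Matrix.mulVec_mulVec, ← Matrix.mulVec_mulVec, Matrix.dotProduct_mulVec,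
      ← Matrix.star_mulVec]
  rw [h1]
  have h2 : K *ᵥ x = fun p : Fin n × Fin n =>
      (fun i => a i 0) p.1 * (fun k => x (0, k)) p.2 := by
    funext p
    simp only [hK, Matrix.mulVec, dotProduct, Fintype.sum_prod_type, kroneckerMap_apply,
      Matrix.one_apply, mul_ite, ite_mul, mul_zero, zero_mul, mul_one, one_mul,
      Finset.sum_ite_eq, Finset.sum_ite_eq', Finset.mem_univ, if_true, Fin.sum_univ_one]
  rw [h2]
  exact hX (fun i => a i 0) (fun k => x (0, k))

/-- For a convex cone `Sₙ ⊆ Cₙ ⊆ Pₙ` invariant under `Ad_A ⊗ id_n`,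
the generated family `{C_m}` satisfies `C₁ = Mₙ⁺` and compression invariance,
i.e. it defines an operator system on `Mₙ`. -/
theorem stmt7 (n : ℕ) (Cn : Set (Mat2 n n))
    (hconv : IsConvexConeMat Cn)
    (hS : ∀ X : Mat2 n n, SepMat X → X ∈ Cn)
    (hP : ∀ X ∈ Cn, BlockPos X)
    (hinv : ∀ A : Mat n, ∀ X ∈ Cn, adT A X ∈ Cn) :
    genCone Cn 1 = {X : Mat2 1 n | X.PosSemidef} ∧
    ∀ m₁ m₂ : ℕ, ∀ B : Matrix (Fin m₁) (Fin m₂) ℂ,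
      ∀ X ∈ genCone Cn m₁, adT B X ∈ genCone Cn m₂ := by
  constructor
  · apply Set.eq_of_subset_of_subset
    · rintro Y ⟨k, A, X, hX, rfl⟩
      exact Finset.sum_induction _ (fun M : Mat2 1 n => M.PosSemidef)
        (fun a b ha hb => ha.add hb) Matrix.PosSemidef.zero
        (fun i _ => adT_posSemidef (A i) X (hP X hX))
    · intro X hX
      simp only [Set.mem_setOf_eq] at hX
      by_cases hn : n = 0
      · subst hn
        refine ⟨0, Fin.elim0, 0,
          hS 0 ⟨0, Fin.elim0, Fin.elim0, (fun i => i.elim0), (fun i => i.elim0), by simp⟩, ?_⟩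
        ext p q
        exact p.2.elim0
      · have hpos : 0 < n := Nat.pos_of_ne_zero hn
        set z : Fin n := ⟨0, hpos⟩ with hz
        set X' : Mat n := X.submatrix (fun k => ((0 : Fin 1), k)) (fun k => ((0 : Fin 1), k))
          with hX'
        have hX'ps : X'.PosSemidef := hX.submatrix _
        set A : Matrix (Fin n) (Fin 1) ℂ := Matrix.of fun i _ => if i = z then 1 else 0 with hA
        have hsep : SepMat (kron 1 X') :=
          ⟨1, fun _ => 1, fun _ => X', fun _ => Matrix.PosSemidef.one, fun _ => hX'ps, by
            rw [Fin.sum_univ_one]⟩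
        refine ⟨1, fun _ => A, kron 1 X', hS _ hsep, ?_⟩
        rw [Fin.sum_univ_one]
        ext p q
        have hp : p = ((0 : Fin 1), p.2) := Prod.ext (Subsingleton.elim _ _) rfl
        have hq : q = ((0 : Fin 1), q.2) := Prod.ext (Subsingleton.elim _ _) rfl
        rw [hp, hq]
        simp [adT, hA, kron, Matrix.one_apply, apply_ite (star : ℂ → ℂ), ite_mul, mul_ite,
          mul_zero, zero_mul, Finset.sum_ite_eq, Finset.sum_ite_eq', hX', submatrix_apply]
  · rintro m₁ m₂ B Y ⟨k, A, X, hX, rfl⟩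
    exact ⟨k, fun i => A i * B, X, hX, by
      rw [adT_sum]; exact Finset.sum_congr rfl fun i _ => adT_comp (A i) B X⟩
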